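/- A point β* ∈ ℝ^p minimizes f over ℝ^p if and only if for every coordinate i, x_iᵀ(y − Xβ*) ∈ λ·SGN(β*_i), where λ·SGN(t) denotes the set {λs : s ∈ SGN(t)}. -/

import Mathlib

open Matrix BigOperators

/-- SGN(t): {1} if t > 0, {−1} if t < 0, and [−1,1] if t = 0. -/
noncomputable def SGN (t : ℝ) : Set ℝ :=
  if t > 0 then {1} else if t < 0 then {-1} else Set.Icc (-1) 1

/-- A point β* ∈ ℝ^p minimizes f over ℝ^p if and only if for
every coordinate i, x_iᵀ(y − Xβ*) ∈ λ·SGN(β*_i). -/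
lemma sgn_props {t s : ℝ} (hs : s ∈ SGN t) : |s| ≤ 1 ∧ s * t = |t| := by
  unfold SGN at hs
  split_ifs at hs with h1 h2
  · simp only [Set.mem_singleton_iff] at hs
    subst hs
    exact ⟨by norm_num, by rw [one_mul, abs_of_pos h1]⟩
  · simp only [Set.mem_singleton_iff] at hs
    subst hs
    exact ⟨by norm_num, by rw [abs_of_neg h2]; ring⟩
  · have ht : t = 0 := le_antisymm (not_lt.1 h1) (not_lt.1 h2)
    exact ⟨abs_le.2 ⟨hs.1, hs.2⟩, by simp [ht]⟩

lemma key {A B δ : ℝ} (hA : 0 ≤ A) (hδ : 0 < δ)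
    (h : ∀ t, 0 < t → t < δ → 0 ≤ A * t ^ 2 + B * t) : 0 ≤ B := by
  by_contra hB
  push_neg at hB
  have hA1 : (0:ℝ) < A + 1 := by linarith
  set t := min (δ / 2) (-B / (A + 1)) with ht
  have ht0 : 0 < t := lt_min (by linarith) (div_pos (by linarith) hA1)
  have htδ : t < δ := lt_of_le_of_lt (min_le_left _ _) (by linarith)
  have h3 : t * (A + 1) ≤ -B := (le_div_iff₀ hA1).1 (min_le_right _ _)
  have h4 : A * t + B ≤ -t := by nlinarith
  have h5 := h t ht0 htδ
  nlinarith [mul_le_mul_of_nonneg_left h4 ht0.le, sq_nonneg t]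

theorem stmt_10 {n p : ℕ} (X : Matrix (Fin n) (Fin p) ℝ) (y : Fin n → ℝ)
    (lam : ℝ) (hlam : 0 ≤ lam)
    (hX : ∀ i : Fin p, Xᵀ i ≠ 0)
    (f : (Fin p → ℝ) → ℝ)
    (hf : ∀ β, f β = (1 / 2) * ∑ k, (X.mulVec β k - y k) ^ 2 + lam * ∑ i, |β i|)
    (βstar : Fin p → ℝ) :
    (∀ β : Fin p → ℝ, f βstar ≤ f β) ↔
    (∀ i : Fin p, (∑ k, X k i * (y k - X.mulVec βstar k)) ∈
      (fun s : ℝ => lam * s) '' SGN (βstar i)) := by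
  have hmv : ∀ (i : Fin p) (t : ℝ) (k : Fin n),
      X.mulVec (βstar + t • (Pi.single i 1 : Fin p → ℝ)) k = X.mulVec βstar k + t * X k i := by
    intro i t k
    simp [Matrix.mulVec_add, Matrix.mulVec_smul, Matrix.mulVec_single, mul_comm]
  have habs : ∀ (i : Fin p) (t : ℝ), ∑ j, |(βstar + t • (Pi.single i 1 : Fin p → ℝ)) j|
      = (∑ j, |βstar j|) + (|βstar i + t| - |βstar i|) := by
    intro i t
    rw [← Finset.sum_erase_add _ _ (Finset.mem_univ i),
        ← Finset.sum_erase_add Finset.univ (fun j => |βstar j|) (Finset.mem_univ i)]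
    have h1 : ∀ j ∈ Finset.univ.erase i, |(βstar + t • (Pi.single i 1 : Fin p → ℝ)) j| = |βstar j| := by
      intro j hj
      have hji : j ≠ i := Finset.ne_of_mem_erase hj
      simp [Pi.single_eq_of_ne hji]
    rw [Finset.sum_congr rfl h1]
    simp [Pi.single_eq_same]
    ring
  have hdiff : ∀ (i : Fin p) (t : ℝ),
      f (βstar + t • (Pi.single i 1 : Fin p → ℝ)) - f βstar =
        (∑ k, (X k i) ^ 2) / 2 * t ^ 2 + (∑ k, (X.mulVec βstar k - y k) * X k i) * t
          + lam * (|βstar i + t| - |βstar i|) := by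
    intro i t
    rw [hf, hf]
    have h1 : ∀ k ∈ Finset.univ, (X.mulVec (βstar + t • (Pi.single i 1 : Fin p → ℝ)) k - y k) ^ 2
        = (X.mulVec βstar k - y k) ^ 2 + ((2 * ((X.mulVec βstar k - y k) * X k i)) * t
          + ((X k i) ^ 2) * t ^ 2) := by
      intro k _
      rw [hmv i t k]; ring
    rw [Finset.sum_congr rfl h1, Finset.sum_add_distrib, Finset.sum_add_distrib, habs i t,
      ← Finset.sum_mul, ← Finset.sum_mul, ← Finset.mul_sum]
    ring
  constructor
  · intro hmin i
    set A := ∑ k, (X k i) ^ 2 with hA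
    set B := ∑ k, (X.mulVec βstar k - y k) * X k i with hB
    have hA0 : 0 ≤ A / 2 := by
      have : 0 ≤ A := Finset.sum_nonneg fun k _ => sq_nonneg _
      linarith
    have hC : (∑ k, X k i * (y k - X.mulVec βstar k)) = -B := by
      rw [hB, ← Finset.sum_neg_distrib]
      exact Finset.sum_congr rfl fun k _ => by ring
    have hge : ∀ t : ℝ, 0 ≤ A / 2 * t ^ 2 + B * t + lam * (|βstar i + t| - |βstar i|) := by
      intro t
      have h1 := hmin (βstar + t • (Pi.single i 1 : Fin p → ℝ))
      have h2 := hdiff i t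
      linarith
    rw [hC]
    rcases lt_trichotomy (βstar i) 0 with h | h | h
    · -- βstar i < 0 : B = lam, value -lam = lam * (-1)
      have h1 : 0 ≤ B - lam := by
        apply key hA0 (neg_pos.2 h) (B := B - lam)
        intro t ht0 htδ
        have := hge t
        rw [abs_of_neg h, abs_of_neg (by linarith : βstar i + t < 0)] at this
        linarith
      have h2 : 0 ≤ lam - B := by
        apply key hA0 one_pos (B := lam - B)
        intro t ht0 htδ
        have := hge (-t)
        rw [abs_of_neg h, abs_of_neg (by linarith : βstar i + -t < 0)] at this
        nlinarith
      refine ⟨-1, by simp [SGN, h, asymm h], by show lam * (-1) = -B; linarith⟩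
    · -- βstar i = 0
      have h1 : 0 ≤ B + lam := by
        apply key hA0 one_pos (B := B + lam)
        intro t ht0 htδ
        have := hge t
        rw [h] at this
        rw [abs_of_pos (by linarith : (0:ℝ) + t > 0)] at this
        simp at this
        linarith
      have h2 : 0 ≤ lam - B := by
        apply key hA0 one_pos (B := lam - B)
        intro t ht0 htδ
        have := hge (-t)
        rw [h] at this
        rw [abs_of_neg (by linarith : (0:ℝ) + -t < 0)] at this
        simp at this
        linarith
      by_cases hl : lam = 0
      · refine ⟨0, by simp [SGN, h], by show lam * 0 = -B; rw [mul_zero]; linarith [h1, h2, hl ▸ le_refl (0:ℝ)]⟩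
      · have hlp : 0 < lam := lt_of_le_of_ne hlam (Ne.symm hl)
        refine ⟨-B / lam, ?_, ?_⟩
        · simp only [SGN, h, lt_irrefl, if_neg (lt_irrefl (0:ℝ))]
          constructor
          · rw [le_div_iff₀ hlp]; linarith
          · rw [div_le_one hlp]; linarith
        · show lam * (-B / lam) = -B
          field_simp
      -- βstar i > 0 : B = -lam
    · have h1 : 0 ≤ B + lam := by
        apply key hA0 one_pos (B := B + lam)
        intro t ht0 htδ
        have := hge t
        rw [abs_of_pos h, abs_of_pos (by linarith : βstar i + t > 0)] at this
        linarith
      have h2 : 0 ≤ -(B + lam) := by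
        apply key hA0 h (B := -(B + lam))
        intro t ht0 htδ
        have := hge (-t)
        rw [abs_of_pos h, abs_of_pos (by linarith : βstar i + -t > 0)] at this
        linarith
      refine ⟨1, by simp [SGN, h], by show lam * 1 = -B; linarith⟩
  · intro hc β
    have hs' : ∀ i : Fin p, ∃ s, s ∈ SGN (βstar i)
        ∧ lam * s = ∑ k, X k i * (y k - X.mulVec βstar k) := by
      intro i
      obtain ⟨s, hs1, hs2⟩ := hc i
      exact ⟨s, hs1, hs2⟩
    choose s hs1 hs2 using hs'
    have hfd : f β - f βstar = (1 / 2) * ∑ k, (X.mulVec β k - X.mulVec βstar k) ^ 2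
        + ∑ k, (X.mulVec βstar k - y k) * (X.mulVec β k - X.mulVec βstar k)
        + (lam * ∑ i, |β i| - lam * ∑ i, |βstar i|) := by
      rw [hf, hf]
      have h1 : ∀ k ∈ Finset.univ, (X.mulVec β k - y k) ^ 2 =
          (X.mulVec βstar k - y k) ^ 2 + ((X.mulVec β k - X.mulVec βstar k) ^ 2
            + 2 * ((X.mulVec βstar k - y k) * (X.mulVec β k - X.mulVec βstar k))) := by
        intro k _; ring
      rw [Finset.sum_congr rfl h1, Finset.sum_add_distrib, Finset.sum_add_distrib,
        ← Finset.mul_sum]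
      ring
    have hBi : ∀ i : Fin p, ∑ k, (X.mulVec βstar k - y k) * X k i = -(lam * s i) := by
      intro i
      rw [hs2 i, ← Finset.sum_neg_distrib]
      exact Finset.sum_congr rfl fun k _ => by ring
    have hswap : ∑ k, (X.mulVec βstar k - y k) * (X.mulVec β k - X.mulVec βstar k)
        = ∑ i, (∑ k, (X.mulVec βstar k - y k) * X k i) * (β i - βstar i) := by
      have h1 : ∀ k ∈ Finset.univ, (X.mulVec βstar k - y k) * (X.mulVec β k - X.mulVec βstar k)
          = ∑ i, (X.mulVec βstar k - y k) * X k i * (β i - βstar i) := by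
        intro k _
        have h2 : X.mulVec β k - X.mulVec βstar k = ∑ i, X k i * (β i - βstar i) := by
          simp only [Matrix.mulVec, dotProduct, ← Finset.sum_sub_distrib, mul_sub]
        rw [h2, Finset.mul_sum]
        exact Finset.sum_congr rfl fun i _ => by ring
      rw [Finset.sum_congr rfl h1, Finset.sum_comm]
      exact Finset.sum_congr rfl fun i _ => by rw [Finset.sum_mul]
    have hS2 : ∑ k, (X.mulVec βstar k - y k) * (X.mulVec β k - X.mulVec βstar k)
        = -∑ i, lam * s i * (β i - βstar i) := by
      rw [hswap, ← Finset.sum_neg_distrib]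
      exact Finset.sum_congr rfl fun i _ => by rw [hBi i]; ring
    have hterm : ∀ i ∈ Finset.univ, (0:ℝ) ≤ lam * |β i| - lam * |βstar i|
        - lam * s i * (β i - βstar i) := by
      intro i _
      obtain ⟨ha, hb⟩ := sgn_props (hs1 i)
      have h1 : s i * β i ≤ |β i| :=
        calc s i * β i ≤ |s i * β i| := le_abs_self _
        _ = |s i| * |β i| := abs_mul _ _
        _ ≤ 1 * |β i| := mul_le_mul_of_nonneg_right ha (abs_nonneg _)
        _ = |β i| := one_mul _
      nlinarith [mul_le_mul_of_nonneg_left h1 hlam]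
    have hS : 0 ≤ ∑ i, (lam * |β i| - lam * |βstar i| - lam * s i * (β i - βstar i)) :=
      Finset.sum_nonneg hterm
    have hSsplit : ∑ i, (lam * |β i| - lam * |βstar i| - lam * s i * (β i - βstar i))
        = lam * ∑ i, |β i| - lam * ∑ i, |βstar i| - ∑ i, lam * s i * (β i - βstar i) := by
      rw [Finset.sum_sub_distrib, Finset.sum_sub_distrib, Finset.mul_sum, Finset.mul_sum]
    have hd2 : 0 ≤ ∑ k, (X.mulVec β k - X.mulVec βstar k) ^ 2 :=
      Finset.sum_nonneg fun k _ => sq_nonneg _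
    rw [hSsplit] at hS
    linarith [hfd, hS2]
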